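/- For λ, λ', α, α' ∈ ℂ \ {0} and β, β', γ, γ' ∈ ℂ, the 𝔏-modules Θ(λ, α, β, γ) and Θ(λ', α', β', γ') are isomorphic if and only if (λ, α, β, γ) = (λ', α', β', γ'). -/

import Mathlib

open MvPolynomial

abbrev R2 : Type := MvPolynomial (Fin 2) ℂ

/-- Substitution `g(s,t) ↦ g(s - u, t + v)`. -/
noncomputable def sh (u v : ℂ) : R2 →ₐ[ℂ] R2 := aeval ![X 0 - C u, X 1 + C v]

/-- Action of `e_i` in `Θ(λ,α,β,γ)`. -/
noncomputable def thE (lam a b : ℂ) (i : ℤ) (g : R2) : R2 :=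
  C (lam ^ i * a) * (C 2⁻¹ * X 1 + C b) * sh (i : ℂ) (-2) g

/-- Action of `f_i` in `Θ(λ,α,β,γ)`. -/
noncomputable def thF (lam a b : ℂ) (i : ℤ) (g : R2) : R2 :=
  C (-(lam ^ i / a)) * (C 2⁻¹ * X 1 - C b) * sh (i : ℂ) 2 g

/-- Action of `h_i`. -/
noncomputable def opH (lam : ℂ) (i : ℤ) (g : R2) : R2 :=
  C (lam ^ i) * X 1 * sh (i : ℂ) 0 g

/-- Action of `d_i`. -/
noncomputable def opD (lam c : ℂ) (i : ℤ) (g : R2) : R2 :=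
  C (lam ^ i) * (X 0 + C ((i : ℂ) * c)) * sh (i : ℂ) 0 g

lemma sh_id (g : R2) : sh 0 0 g = g := by
  have h : (![X 0 - C 0, X 1 + C 0] : Fin 2 → R2) = X := by
    funext i; fin_cases i <;> simp
  show aeval ![X 0 - C 0, X 1 + C 0] g = g
  rw [h, aeval_X_left_apply]

lemma sh_C (u v w : ℂ) : sh u v (C w) = C w := by
  simp [sh, algebraMap_eq]

/-- A unit of `R2` is a nonzero constant. -/
lemma unit_is_C {p : R2} (h : IsUnit p) : ∃ u : ℂ, u ≠ 0 ∧ p = C u := by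
  have h1 : IsUnit (finSuccEquiv ℂ 1 p) := h.map (finSuccEquiv ℂ 1)
  have hd1 := Polynomial.natDegree_eq_zero_of_isUnit h1
  have hq : finSuccEquiv ℂ 1 p = Polynomial.C ((finSuccEquiv ℂ 1 p).coeff 0) :=
    Polynomial.eq_C_coeff_zero_iff_natDegree_eq_zero.mpr hd1
  set q : MvPolynomial (Fin 1) ℂ := (finSuccEquiv ℂ 1 p).coeff 0 with hqdef
  have hq' : IsUnit q := by
    rw [hq] at h1; exact Polynomial.isUnit_C.mp h1
  have h2 : IsUnit (finSuccEquiv ℂ 0 q) := hq'.map (finSuccEquiv ℂ 0)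
  have hd2 := Polynomial.natDegree_eq_zero_of_isUnit h2
  have hr : finSuccEquiv ℂ 0 q = Polynomial.C ((finSuccEquiv ℂ 0 q).coeff 0) :=
    Polynomial.eq_C_coeff_zero_iff_natDegree_eq_zero.mpr hd2
  set r : MvPolynomial (Fin 0) ℂ := (finSuccEquiv ℂ 0 q).coeff 0 with hrdef
  have hrC : r = C (r.coeff 0) := MvPolynomial.eq_C_of_isEmpty r
  set u : ℂ := r.coeff 0 with hudef
  -- q = C u
  have hqC : q = C u := by
    have := congrArg (finSuccEquiv ℂ 0).symm hr
    rw [(finSuccEquiv ℂ 0).symm_apply_apply] at this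
    rw [this, hrC]
    exact RingHom.congr_fun (MvPolynomial.finSuccEquiv_comp_C_eq_C 0) u
  -- p = C u
  have hpC : p = C u := by
    have := congrArg (finSuccEquiv ℂ 1).symm hq
    rw [(finSuccEquiv ℂ 1).symm_apply_apply] at this
    rw [this, hqC]
    exact RingHom.congr_fun (MvPolynomial.finSuccEquiv_comp_C_eq_C 1) u
  refine ⟨u, ?_, hpC⟩
  intro hu0
  rw [hu0, map_zero] at hpC
  exact h.ne_zero hpC

/-- Θ(λ,α,β,γ) ≅ Θ(λ',α',β',γ') iff the parameters coincide; an isomorphism is a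
ℂ-linear equivalence intertwining the actions of all e_i, f_i, h_i, d_i. -/
theorem stmt11 (lam lam' a a' : ℂ) (hlam : lam ≠ 0) (hlam' : lam' ≠ 0)
    (ha : a ≠ 0) (ha' : a' ≠ 0) (b b' c c' : ℂ) :
    (∃ φ : R2 ≃ₗ[ℂ] R2,
      (∀ (i : ℤ) (g : R2), φ (thE lam a b i g) = thE lam' a' b' i (φ g)) ∧
      (∀ (i : ℤ) (g : R2), φ (thF lam a b i g) = thF lam' a' b' i (φ g)) ∧
      (∀ (i : ℤ) (g : R2), φ (opH lam i g) = opH lam' i (φ g)) ∧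
      (∀ (i : ℤ) (g : R2), φ (opD lam c i g) = opD lam' c' i (φ g)))
    ↔ (lam = lam' ∧ a = a' ∧ b = b' ∧ c = c') := by
  constructor
  · rintro ⟨φ, hE, _hF, hH, hD⟩
    -- φ commutes with multiplication by X 1 and X 0
    have hX1 : ∀ g : R2, φ (X 1 * g) = X 1 * φ g := by
      intro g
      have := hH 0 g
      simpa [opH, sh_id, mul_assoc] using this
    have hX0 : ∀ g : R2, φ (X 0 * g) = X 0 * φ g := by
      intro g
      have := hD 0 g
      simpa [opD, sh_id, mul_assoc] using this
    -- hence φ is R2-linear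
    have hmod : ∀ (p g : R2), φ (p * g) = p * φ g := by
      intro p
      induction p using MvPolynomial.induction_on with
      | C r =>
          intro g
          rw [← smul_eq_C_mul, ← smul_eq_C_mul, map_smul]
      | add p q hp hq =>
          intro g
          rw [add_mul, map_add, hp, hq, add_mul]
      | mul_X p n hp =>
          intro g
          have hXn : ∀ g : R2, φ (X n * g) = X n * φ g := by
            fin_cases n
            · exact hX0
            · exact hX1
          rw [mul_comm p (X n), mul_assoc, hXn, hp]
          ring
    have hφ : ∀ g : R2, φ g = φ 1 * g := by
      intro g
      have := hmod g 1
      rw [mul_one] at this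
      rw [this, mul_comm]
    -- φ 1 is a unit
    obtain ⟨q, hq⟩ := φ.surjective 1
    have hunit : IsUnit (φ 1) := IsUnit.of_mul_eq_one q (by rw [← hφ q, hq])
    obtain ⟨u, hu0, hu⟩ := unit_is_C hunit
    have hCu : (C u : R2) ≠ 0 := by
      simpa using hu0
    -- From thE at i = 0, g = 1
    have hEeq : (C a * (C 2⁻¹ * X 1 + C b) : R2) = C a' * (C 2⁻¹ * X 1 + C b') := by
      have h0 := hE 0 1
      rw [hφ (thE lam a b 0 1), hφ 1, hu] at h0
      simp only [thE, zpow_zero, one_mul, Int.cast_zero, sh_id, sh_C, mul_one, map_one] at h0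
      have h0' : (C a * (C 2⁻¹ * X 1 + C b) * C u : R2) = C a' * (C 2⁻¹ * X 1 + C b') * C u := by
        rw [mul_comm (C u)] at h0
        linear_combination h0
      exact mul_right_cancel₀ hCu h0'
    -- From opD at i = 1, g = 1
    have hDeq : (C lam * (X 0 + C c) : R2) = C lam' * (X 0 + C c') := by
      have h0 := hD 1 1
      rw [hφ (opD lam c 1 1), hφ 1, hu] at h0
      simp only [opD, zpow_one, Int.cast_one, one_mul, sh_C, mul_one, map_one] at h0
      have h0' : (C lam * (X 0 + C c) * C u : R2) = C lam' * (X 0 + C c') * C u := by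
        rw [mul_comm (C u)] at h0
        linear_combination h0
      exact mul_right_cancel₀ hCu h0'
    -- extract coefficients
    have coeffE1 := congrArg (coeff (Finsupp.single 1 1)) hEeq
    have coeffE0 := congrArg (coeff 0) hEeq
    have coeffD1 := congrArg (coeff (Finsupp.single 0 1)) hDeq
    have coeffD0 := congrArg (coeff 0) hDeq
    have h01 : (0 : Fin 2 →₀ ℕ) ≠ Finsupp.single (1 : Fin 2) 1 :=
      fun h => one_ne_zero (Finsupp.single_eq_zero.mp h.symm)
    have h00 : (0 : Fin 2 →₀ ℕ) ≠ Finsupp.single (0 : Fin 2) 1 :=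
      fun h => one_ne_zero (Finsupp.single_eq_zero.mp h.symm)
    simp only [mul_add, ← mul_assoc, ← map_mul, coeff_add, coeff_C_mul, coeff_X,
      coeff_C, coeff_zero_X, h01, h00, h01.symm, h00.symm, if_neg, if_pos, mul_one, mul_zero, add_zero, zero_add, if_false,
      if_true, eq_self_iff_true] at coeffE1 coeffE0 coeffD1 coeffD0
    -- coeffE1 : a * 2⁻¹ = a' * 2⁻¹ ; coeffE0 : a * b = a' * b'
    -- coeffD1 : lam = lam' ; coeffD0 : lam * c = lam' * c'
    have haa : a = a' := by
      field_simp at coeffE1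
      exact coeffE1
    have hll : lam = lam' := coeffD1
    refine ⟨hll, haa, ?_, ?_⟩
    · have : a * b = a * b' := by rw [coeffE0, haa]
      exact mul_left_cancel₀ ha this
    · have : lam * c = lam * c' := by rw [coeffD0, hll]
      exact mul_left_cancel₀ hlam this
  · rintro ⟨rfl, rfl, rfl, rfl⟩
    exact ⟨LinearEquiv.refl ℂ R2, fun i g => rfl, fun i g => rfl, fun i g => rfl, fun i g => rfl⟩
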